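/- Let Γ be a set and E = ℓ¹(Γ) the Banach space of real summable families on Γ. Let Y = {e_γ : γ ∈ Γ} be the set of standard unit vectors (e_γ is the family equal to 1 at γ and 0 elsewhere). Then Y is a closed subset of E in the weak topology σ(E, E*), and Y is discrete in the weak topology: for every γ ∈ Γ there is a weakly open set W with W ∩ Y = {e_γ}. -/

import Mathlib

section Aux
variable (Γ : Type*)

local notation "E'" => lp (fun _ : Γ => ℝ) 1

lemma aux_hasSum (f : E') : HasSum (fun γ => |f γ|) ‖f‖ := by
  have := lp.hasSum_norm (p := 1) (by norm_num) f
  simpa using this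

lemma aux_summable (f : E') : Summable fun γ => f γ :=
  (summable_abs_iff).mp ⟨‖f‖, aux_hasSum Γ f⟩

noncomputable def coordCLM (γ : Γ) : E' →L[ℝ] ℝ :=
  LinearMap.mkContinuous
    { toFun := fun f => f γ
      map_add' := fun f g => by simp [lp.coeFn_add]
      map_smul' := fun c f => by simp [lp.coeFn_smul] }
    1 (fun f => by
      show ‖f γ‖ ≤ 1 * ‖f‖
      simpa using lp.norm_apply_le_norm (p := 1) (by norm_num) f γ)

@[simp] lemma coordCLM_apply (γ : Γ) (f : E') : coordCLM Γ γ f = f γ := rfl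

noncomputable def sumCLM : E' →L[ℝ] ℝ :=
  LinearMap.mkContinuous
    { toFun := fun f => ∑' γ, f γ
      map_add' := fun f g => by
        have hf := aux_summable Γ f
        have hg := aux_summable Γ g
        simp only [lp.coeFn_add, Pi.add_apply]
        exact Summable.tsum_add hf hg
      map_smul' := fun c f => by
        simp only [lp.coeFn_smul, Pi.smul_apply, smul_eq_mul, RingHom.id_apply]
        exact tsum_mul_left }
    1 (fun f => by
      simp only [one_mul]
      calc ‖∑' γ, f γ‖ ≤ ∑' γ, |f γ| := by
            simpa using norm_tsum_le_tsum_norm (f := fun γ => f γ)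
              (by simpa using (aux_hasSum Γ f).summable)
        _ = ‖f‖ := (aux_hasSum Γ f).tsum_eq)

@[simp] lemma sumCLM_apply (f : E') : sumCLM Γ f = ∑' γ, f γ := rfl

lemma weak_cont (f : E' →L[ℝ] ℝ) :
    Continuous fun x : WeakSpace ℝ E' => f ((toWeakSpace ℝ E').symm x) :=
  WeakBilin.eval_continuous _ f

end Aux

/-- In `ℓ¹(Γ)`, the set of standard unit vectors is weakly closed and weakly discrete. -/
theorem lp_one_unitVectors_weaklyClosed_and_discrete (Γ : Type*) [DecidableEq Γ] :
    let E := lp (fun _ : Γ => ℝ) 1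
    let Y : Set (WeakSpace ℝ E) :=
      Set.range fun γ : Γ => toWeakSpace ℝ E (lp.single 1 γ (1 : ℝ))
    IsClosed Y ∧
      ∀ γ : Γ, ∃ W : Set (WeakSpace ℝ E), IsOpen W ∧
        W ∩ Y = {toWeakSpace ℝ E (lp.single 1 γ (1 : ℝ))} := by
  intro E Y
  have hsymm : ∀ z : E, (toWeakSpace ℝ E).symm (toWeakSpace ℝ E z) = z :=
    fun z => (toWeakSpace ℝ E).symm_apply_apply z
  have hsingle : ∀ δ γ : Γ, (lp.single (E := fun _ : Γ => ℝ) 1 δ (1:ℝ)) γ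
      = if γ = δ then (1:ℝ) else 0 := by
    intro δ γ
    rw [lp.single_apply]
    by_cases h : γ = δ <;> simp [h]
  constructor
  · rw [← isOpen_compl_iff, isOpen_iff_forall_mem_open]
    intro x hx
    set f : E := (toWeakSpace ℝ E).symm x with hf
    have hxf : toWeakSpace ℝ E f = x := (toWeakSpace ℝ E).apply_symm_apply x
    by_cases h0 : ∃ γ₀, f γ₀ ≠ 0
    · obtain ⟨γ₀, hγ₀⟩ := h0
      by_cases h1 : ∃ γ₁, γ₁ ≠ γ₀ ∧ f γ₁ ≠ 0
      · obtain ⟨γ₁, hne, hγ₁⟩ := h1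
        refine ⟨(fun y : WeakSpace ℝ E => coordCLM Γ γ₀ ((toWeakSpace ℝ E).symm y)) ⁻¹'
            Metric.ball (f γ₀) |f γ₀| ∩
            (fun y : WeakSpace ℝ E => coordCLM Γ γ₁ ((toWeakSpace ℝ E).symm y)) ⁻¹'
            Metric.ball (f γ₁) |f γ₁|, ?_, ?_, ?_⟩
        · rintro y ⟨hy0, hy1⟩ ⟨δ, rfl⟩
          simp only [Set.mem_preimage, Metric.mem_ball, coordCLM_apply, hsymm,
            Real.dist_eq, hsingle] at hy0 hy1
          by_cases hδ : δ = γ₀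
          · subst hδ
            rw [if_neg hne] at hy1
            simp at hy1
          · rw [if_neg (fun h => hδ h.symm)] at hy0
            · simp at hy0
        · exact IsOpen.inter
            (((weak_cont Γ (coordCLM Γ γ₀)).isOpen_preimage _ Metric.isOpen_ball))
            (((weak_cont Γ (coordCLM Γ γ₁)).isOpen_preimage _ Metric.isOpen_ball))
        · constructor <;>
            simp [coordCLM_apply, abs_pos, hγ₀, hγ₁, ← hf]
      · push_neg at h1
        set c : ℝ := f γ₀ with hc
        have hc1 : c ≠ 1 := by
          intro hc1
          apply hx
          have hfs : f = lp.single 1 γ₀ 1 := by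
            apply lp.ext
            funext γ
            rw [hsingle]
            by_cases h : γ = γ₀
            · subst h; simpa [← hc] using hc1
            · simp [h, h1 γ h]
          exact ⟨γ₀, by
            show toWeakSpace ℝ E (lp.single 1 γ₀ 1) = x
            rw [← hfs]; exact hxf⟩
        set ε : ℝ := min |c| |c - 1| with hε
        have hεpos : 0 < ε := lt_min (abs_pos.mpr hγ₀) (abs_pos.mpr (sub_ne_zero.mpr hc1))
        refine ⟨(fun y : WeakSpace ℝ E => coordCLM Γ γ₀ ((toWeakSpace ℝ E).symm y)) ⁻¹'
            Metric.ball c ε, ?_, ?_, ?_⟩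
        · rintro y hy ⟨δ, rfl⟩
          simp only [Set.mem_preimage, Metric.mem_ball, coordCLM_apply, hsymm,
            Real.dist_eq, hsingle] at hy
          by_cases hδ : γ₀ = δ
          · rw [if_pos hδ] at hy
            have : ε ≤ |1 - c| := by
              rw [abs_sub_comm]; exact min_le_right _ _
            linarith
          · rw [if_neg hδ] at hy
            have : ε ≤ |c| := min_le_left _ _
            rw [abs_sub_comm, sub_zero] at hy
            linarith
        · exact (weak_cont Γ (coordCLM Γ γ₀)).isOpen_preimage _ Metric.isOpen_ball
        · simp [coordCLM_apply, hεpos, ← hf, ← hc]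
    · push_neg at h0
      have hf0 : f = 0 := lp.ext (funext h0)
      refine ⟨(fun y : WeakSpace ℝ E => sumCLM Γ ((toWeakSpace ℝ E).symm y)) ⁻¹'
          Metric.ball 0 (1/2), ?_, ?_, ?_⟩
      · rintro y hy ⟨δ, rfl⟩
        simp only [Set.mem_preimage, Metric.mem_ball, sumCLM_apply, hsymm,
          Real.dist_eq] at hy
        have : (∑' γ, (lp.single (E := fun _ : Γ => ℝ) 1 δ (1:ℝ)) γ) = 1 := by
          have : (fun γ => (lp.single (E := fun _ : Γ => ℝ) 1 δ (1:ℝ)) γ)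
              = fun γ => if γ = δ then (1:ℝ) else 0 := funext fun γ => hsingle δ γ
          rw [this, tsum_ite_eq]
        rw [this] at hy
        norm_num at hy
      · exact (weak_cont Γ (sumCLM Γ)).isOpen_preimage _ Metric.isOpen_ball
      · simp [sumCLM_apply, ← hf, hf0]
  · intro γ
    refine ⟨(fun y : WeakSpace ℝ E => coordCLM Γ γ ((toWeakSpace ℝ E).symm y)) ⁻¹'
        Set.Ioi (1/2 : ℝ),
      (weak_cont Γ (coordCLM Γ γ)).isOpen_preimage _ isOpen_Ioi, ?_⟩
    ext y
    simp only [Set.mem_inter_iff, Set.mem_preimage, Set.mem_Ioi, Set.mem_singleton_iff,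
      Y, Set.mem_range]
    constructor
    · rintro ⟨h, δ, rfl⟩
      simp only [coordCLM_apply, hsymm, hsingle] at h
      by_cases hδ : γ = δ
      · subst hδ; rfl
      · rw [if_neg hδ] at h; norm_num at h
    · rintro rfl
      refine ⟨?_, γ, rfl⟩
      simp only [coordCLM_apply, hsymm, hsingle]
      norm_num
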